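/- Let S be a complete fair LTS with initial state q. If for every complete fair LTS S' with initial state q', the implication L(q') ⊆ L(q) ⟹ q' ⊑_fair q holds, then S is history-deterministic from q. -/

import Mathlib

/-- A fair labelled transition system: edges `E ⊆ V × A × V` together with an
acceptance condition `Acc` on infinite sequences of edges. -/
structure FairLTS (V A : Type) where
  E : Set (V × A × V)
  Acc : Set (ℕ → V × A × V)

namespace FairLTS

variable {V V' A : Type}

/-- `ρ` is a run on the word `w` from state `s₀`. -/
def IsRun (S : FairLTS V A) (s₀ : V) (w : ℕ → A) (ρ : ℕ → V × A × V) : Prop :=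
  (ρ 0).1 = s₀ ∧ ∀ n, ρ n ∈ S.E ∧ (ρ n).2.1 = w n ∧ (ρ (n + 1)).1 = (ρ n).2.2

/-- The language of infinite words admitting an accepting run from `s₀`. -/
def Lang (S : FairLTS V A) (s₀ : V) : Set (ℕ → A) :=
  {w | ∃ ρ, S.IsRun s₀ w ρ ∧ ρ ∈ S.Acc}

/-- Every state has at least one outgoing `a`-transition for every letter `a`. -/
def Complete (S : FairLTS V A) : Prop :=
  ∀ s a, ∃ s', (s, a, s') ∈ S.E

/-- The finite run (as a list of edges) built by iterating a candidate resolver `r`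
on the word `w`. -/
def histOf (r : List (V × A × V) → A → V × A × V) (w : ℕ → A) : ℕ → List (V × A × V)
  | 0 => []
  | n + 1 => histOf r w n ++ [r (histOf r w n) (w n)]

/-- The infinite run built by iterating `r` on the word `w`. -/
def runOf (r : List (V × A × V) → A → V × A × V) (w : ℕ → A) (n : ℕ) : V × A × V :=
  r (histOf r w n) (w n)

/-- `r` is a resolver from `s₀`: for every word of the language, the run it builds
is an accepting run on that word. -/
def IsResolver (S : FairLTS V A) (s₀ : V) (r : List (V × A × V) → A → V × A × V) : Prop :=
  ∀ w ∈ S.Lang s₀, S.IsRun s₀ w (runOf r w) ∧ runOf r w ∈ S.Acc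

/-- History-determinism: existence of a resolver. -/
def HistoryDeterministic (S : FairLTS V A) (s₀ : V) : Prop :=
  ∃ r, S.IsResolver s₀ r

end FairLTS

namespace FairLTS

variable {V V' A : Type}

/-- History of the fair simulation game: Player 1 plays the edges of `ρ₁` one by one,
and Player 2 answers with `σ` applied to the paired history and Player 1's new edge. -/
def simHist (σ : List ((V × A × V) × (V' × A × V')) → (V × A × V) → V' × A × V')
    (ρ₁ : ℕ → V × A × V) : ℕ → List ((V × A × V) × (V' × A × V'))
  | 0 => []
  | n + 1 => simHist σ ρ₁ n ++ [(ρ₁ n, σ (simHist σ ρ₁ n) (ρ₁ n))]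

/-- The run built by Player 2's strategy `σ` in response to Player 1's run `ρ₁`. -/
def simRun (σ : List ((V × A × V) × (V' × A × V')) → (V × A × V) → V' × A × V')
    (ρ₁ : ℕ → V × A × V) (n : ℕ) : V' × A × V' :=
  σ (simHist σ ρ₁ n) (ρ₁ n)

/-- Fair simulation: `s` is fairly simulated by `s'` iff Player 2 has a strategy in the
simulation game which answers every run of `S` from `s` by an equally-labelled run of `S'`
from `s'`, and which produces an accepting run whenever Player 1's run is accepting. -/
def FairSim (S : FairLTS V A) (S' : FairLTS V' A) (s : V) (s' : V') : Prop :=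
  ∃ σ, ∀ (w : ℕ → A) (ρ₁ : ℕ → V × A × V), S.IsRun s w ρ₁ →
    S'.IsRun s' w (simRun σ ρ₁) ∧ (ρ₁ ∈ S.Acc → simRun σ ρ₁ ∈ S'.Acc)

end FairLTS

/-- if a complete fair LTS `S` with initial state `q` fairly simulates every
complete fair LTS whose language is included in `L(q)`, then `S` is
history-deterministic from `q`. -/
theorem stmt3 {V A : Type} (S : FairLTS V A) (q : V) (hS : S.Complete)
    (h : ∀ (V' : Type) (S' : FairLTS V' A) (q' : V'), S'.Complete →
      S'.Lang q' ⊆ S.Lang q → S'.FairSim S q' q) :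
    S.HistoryDeterministic q := by
  classical
  -- the one-state complete LTS whose accepting runs are those labelled by words of L(q)
  set S' : FairLTS Unit A :=
    ⟨Set.univ, {ρ | (fun n => (ρ n).2.1) ∈ S.Lang q}⟩ with hS'def
  have hc : S'.Complete := fun _ _ => ⟨(), trivial⟩
  have hsub : S'.Lang () ⊆ S.Lang q := by
    rintro w ⟨ρ, hρ, hacc⟩
    have hw : (fun n => (ρ n).2.1) = w := funext fun n => (hρ.2 n).2.1
    have hacc' : (fun n => (ρ n).2.1) ∈ S.Lang q := hacc
    rwa [hw] at hacc'
  obtain ⟨σ, hσ⟩ := h Unit S' () hc hsub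
  -- translate histories of the resolver game into histories of the simulation game
  set g : (V × A × V) → (Unit × A × Unit) × (V × A × V) :=
    fun e => (((), e.2.1, ()), e) with hgdef
  set r : List (V × A × V) → A → V × A × V :=
    fun hst a => σ (hst.map g) ((), a, ()) with hrdef
  refine ⟨r, fun w hw => ?_⟩
  set ρ₁ : ℕ → Unit × A × Unit := fun n => ((), w n, ()) with hρ₁def
  have hρ₁ : S'.IsRun () w ρ₁ := ⟨rfl, fun n => ⟨trivial, rfl, rfl⟩⟩
  have hrun := hσ w ρ₁ hρ₁
  have hlabel : ∀ n, (FairLTS.simRun σ ρ₁ n).2.1 = w n := fun n => (hrun.1.2 n).2.1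
  have key : ∀ n, (FairLTS.histOf r w n).map g = FairLTS.simHist σ ρ₁ n := by
    intro n
    induction n with
    | zero => simp [FairLTS.histOf, FairLTS.simHist]
    | succ n ih =>
      have hr : r (FairLTS.histOf r w n) (w n) = FairLTS.simRun σ ρ₁ n := by
        exact congrArg (fun l => σ l ((), w n, ())) ih
      have hg : g (FairLTS.simRun σ ρ₁ n) = (ρ₁ n, FairLTS.simRun σ ρ₁ n) := by
        exact congrArg (fun x => (((), x, ()), FairLTS.simRun σ ρ₁ n)) (hlabel n)
      simp only [FairLTS.histOf, FairLTS.simHist, List.map_append, List.map_cons,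
        List.map_nil, ih, hr, hg]
      rfl
  have hruneq : FairLTS.runOf r w = FairLTS.simRun σ ρ₁ := by
    funext n
    exact congrArg (fun l => σ l ((), w n, ())) (key n)
  have hacc1 : ρ₁ ∈ S'.Acc := by
    have : (fun n => (ρ₁ n).2.1) = w := rfl
    show (fun n => (ρ₁ n).2.1) ∈ S.Lang q
    rwa [this]
  rw [hruneq]
  exact ⟨hrun.1, hrun.2 hacc1⟩
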